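/- Let A ∈ ℝ^{n×n×n} be a 3-dimensional hypermatrix of order n with direction-1 slices A₁,…,A_n ∈ ℝ^{n×n} (so (A_t)_{jk} = A_{tjk}). Suppose there exists an invertible real n × n matrix Λ such that det(∑_{j=1}^{n} Λ_{ij} A_j) = 0 for every i = 1,…,n. Then the tensor rank of A satisfies rank(A) ≤ n(n−1). -/

import Mathlib

open scoped BigOperators

/-- The tensor rank of a 3-dimensional hypermatrix of order `n` over `ℝ`: the least `r`
such that `A` is a sum of `r` decomposable hypermatrices `u ⊗ v ⊗ w`, with entries
`u_i·v_j·w_k`. -/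
noncomputable def tensorRank3 {n : ℕ} (A : Fin n → Fin n → Fin n → ℝ) : ℕ :=
  sInf {r : ℕ | ∃ u v w : Fin r → Fin n → ℝ,
    A = fun i j k => ∑ t : Fin r, u t i * v t j * w t k}

/-- A singular real matrix of order `m+1` is a sum of `m` rank-one matrices. -/
lemma singular_decomp {m : ℕ} (M : Matrix (Fin (m+1)) (Fin (m+1)) ℝ) (hM : M.det = 0) :
    ∃ v w : Fin m → Fin (m+1) → ℝ, ∀ j k, M j k = ∑ s, v s j * w s k := by
  obtain ⟨x, hx0, hx⟩ := (Matrix.exists_mulVec_eq_zero_iff).mpr hM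
  obtain ⟨p, hp⟩ : ∃ p, x p ≠ 0 := by
    by_contra hc; push_neg at hc; exact hx0 (funext hc)
  refine ⟨fun s j => M j (p.succAbove s),
    fun s k => (if k = p.succAbove s then 1 else 0) -
      (if k = p then x (p.succAbove s) / x p else 0),
    fun j k => ?_⟩
  have hne : ∀ s : Fin m, p ≠ p.succAbove s := fun s => (Fin.succAbove_ne p s).symm
  rcases eq_or_ne k p with rfl | hk
  · have hrow : M j k * x k + ∑ s, M j (k.succAbove s) * x (k.succAbove s) = 0 := by
      have := congrFun hx j
      simpa [Matrix.mulVec, dotProduct,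
        Fin.sum_univ_succAbove (fun kk => M j kk * x kk) k] using this
    have hsum : ∑ s, M j (k.succAbove s) * x (k.succAbove s) = -(M j k * x k) := by
      linarith
    simp only [if_neg (hne _), eq_self_iff_true, if_true, zero_sub, mul_neg]
    have hterm : ∀ s : Fin m, -(M j (k.succAbove s) * (x (k.succAbove s) / x k))
        = -(M j (k.succAbove s) * x (k.succAbove s)) * (x k)⁻¹ := by
      intro s; field_simp
    rw [Finset.sum_congr rfl fun s _ => hterm s, ← Finset.sum_mul,
      Finset.sum_neg_distrib, hsum, neg_neg, mul_assoc, mul_inv_cancel₀ hp, mul_one]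
  · obtain ⟨s₀, hs₀⟩ := Fin.exists_succAbove_eq hk
    rw [Finset.sum_eq_single s₀]
    · dsimp only; rw [if_pos hs₀.symm, if_neg hk, hs₀]; ring
    · intro s _ hs
      have hkne : k ≠ p.succAbove s := fun hcon =>
        hs (Fin.succAbove_right_injective (hs₀.trans hcon)).symm
      dsimp only; rw [if_neg hkne, if_neg hk]; ring
    · intro habs; exact absurd (Finset.mem_univ s₀) habs

/-- If there is an invertible real `n × n` matrix `Λ` such that each of the matrices
`∑_j Λ_{ij} A_j` (where `A_t` is the `t`-th direction-1 slice of `A`, `(A_t)_{jk} = A_{tjk}`)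
is singular, then the tensor rank of `A` is at most `n(n-1)`. -/
theorem tensorRank3_le_of_singular_combinations (n : ℕ) (A : Fin n → Fin n → Fin n → ℝ)
    (Λ : Matrix (Fin n) (Fin n) ℝ) (hΛ : IsUnit Λ)
    (h : ∀ i : Fin n,
      Matrix.det (∑ t : Fin n, Λ i t • Matrix.of (A t)) = 0) :
    tensorRank3 A ≤ n * (n - 1) := by
  rcases n with _ | m
  · exact Nat.sInf_le ⟨Fin.elim0, Fin.elim0, Fin.elim0, funext fun i => i.elim0⟩
  · have hdet : IsUnit Λ.det := (Matrix.isUnit_iff_isUnit_det Λ).mp hΛ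
    have hinv : Λ⁻¹ * Λ = 1 := Matrix.nonsing_inv_mul Λ hdet
    set B : Fin (m+1) → Matrix (Fin (m+1)) (Fin (m+1)) ℝ :=
      fun i => Matrix.of fun j k => ∑ t, Λ i t * A t j k with hB
    have hBdet : ∀ i, (B i).det = 0 := by
      intro i
      have hBe : B i = ∑ t, Λ i t • Matrix.of (A t) := by
        ext j k; simp [hB, Matrix.sum_apply]
      rw [hBe]; exact h i
    choose V W hVW using fun i => singular_decomp (B i) (hBdet i)
    have e : Fin ((m+1)*m) ≃ Fin (m+1) × Fin m := finProdFinEquiv.symm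
    have key : A = fun i j k => ∑ t' : Fin ((m+1)*m),
        (fun t' i => Λ⁻¹ i (e t').1) t' i * (fun t' j => V (e t').1 (e t').2 j) t' j *
        (fun t' k => W (e t').1 (e t').2 k) t' k := by
      funext i j k
      dsimp only
      rw [Equiv.sum_comp e (fun p => Λ⁻¹ i p.1 * V p.1 p.2 j * W p.1 p.2 k)]
      rw [Fintype.sum_prod_type]
      have step1 : ∀ i' : Fin (m+1),
          ∑ s : Fin m, Λ⁻¹ i i' * V i' s j * W i' s k = Λ⁻¹ i i' * B i' j k := by
        intro i'
        rw [hVW i' j k, Finset.mul_sum]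
        exact Finset.sum_congr rfl fun s _ => by ring
      rw [Finset.sum_congr rfl fun i' _ => step1 i']
      have step2 : ∀ i' : Fin (m+1),
          Λ⁻¹ i i' * B i' j k = ∑ t, Λ⁻¹ i i' * Λ i' t * A t j k := by
        intro i'
        simp only [hB, Matrix.of_apply, Finset.mul_sum]
        exact Finset.sum_congr rfl fun t _ => by ring
      rw [Finset.sum_congr rfl fun i' _ => step2 i', Finset.sum_comm]
      have step3 : ∀ t : Fin (m+1),
          ∑ i' : Fin (m+1), Λ⁻¹ i i' * Λ i' t * A t j k
            = (1 : Matrix (Fin (m+1)) (Fin (m+1)) ℝ) i t * A t j k := by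
        intro t
        rw [← hinv, Matrix.mul_apply, Finset.sum_mul]
      rw [Finset.sum_congr rfl fun t _ => step3 t]
      simp [Matrix.one_apply]
    have hmem : (m+1)*m ∈ {r : ℕ | ∃ u v w : Fin r → Fin (m+1) → ℝ,
        A = fun i j k => ∑ t : Fin r, u t i * v t j * w t k} :=
      ⟨_, _, _, key⟩
    simpa using (show tensorRank3 A ≤ (m+1)*m from Nat.sInf_le hmem)
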